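/- Let X × Y carry the norm ‖·‖_f. Given a normed space V and linear maps k : X → V, ℓ : Y → V with ‖k‖ ≤ 1, ‖ℓ‖ ≤ 1, and ‖ℓ∘f − k‖ ≤ ε, the unique linear map h : X × Y → V with h(x,y) = k x + ℓ y satisfies ‖h(x,y)‖ ≤ ‖(x,y)‖_f for all (x,y); i.e., ‖h‖ ≤ 1 with respect to ‖·‖_f. -/
import Mathlib


/-- the unique linear map h(x,y) = k x + ℓ y is 1-bounded with
respect to ‖·‖_f whenever ‖k‖ ≤ 1, ‖ℓ‖ ≤ 1 and ‖ℓ∘f − k‖ ≤ ε. -/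
theorem stmt_4 {X Y V : Type*} [NormedAddCommGroup X] [NormedSpace ℝ X]
    [NormedAddCommGroup Y] [NormedSpace ℝ Y]
    [NormedAddCommGroup V] [NormedSpace ℝ V]
    (ε : ℝ) (hε0 : 0 < ε) (hε1 : ε < 1)
    (f : X →ₗ[ℝ] Y) (hf1 : ∀ x, ‖f x‖ ≤ ‖x‖)
    (hf2 : ∀ x, (1 - ε) * ‖x‖ ≤ ‖f x‖)
    (N : X × Y → ℝ)
    (hN : N = fun p => sInf {r : ℝ | ∃ w : X, r = ‖p.1 - w‖ + ‖p.2 + f w‖ + ε * ‖w‖})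
    (k : X →ₗ[ℝ] V) (ℓ : Y →ₗ[ℝ] V)
    (hk : ∀ x, ‖k x‖ ≤ ‖x‖) (hℓ : ∀ y, ‖ℓ y‖ ≤ ‖y‖)
    (hkℓ : ∀ x, ‖ℓ (f x) - k x‖ ≤ ε * ‖x‖) :
    ∀ (x : X) (y : Y), ‖k x + ℓ y‖ ≤ N (x, y) := by
  intro x y
  subst hN
  refine le_csInf ⟨‖x - 0‖ + ‖y + f 0‖ + ε * ‖(0:X)‖, ⟨0, rfl⟩⟩ ?_
  rintro r ⟨w, rfl⟩
  have key : k x + ℓ y = k (x - w) + ℓ (y + f w) + (k w - ℓ (f w)) := by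
    simp [map_sub, map_add]; abel
  rw [key]
  calc ‖k (x - w) + ℓ (y + f w) + (k w - ℓ (f w))‖
      ≤ ‖k (x - w)‖ + ‖ℓ (y + f w)‖ + ‖k w - ℓ (f w)‖ := norm_add₃_le
    _ ≤ ‖x - w‖ + ‖y + f w‖ + ε * ‖w‖ := by
        gcongr
        · exact hk _
        · exact hℓ _
        · rw [← norm_neg]; simpa using hkℓ w
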